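/- Let q be a prime power and set d = gcd(2, q−1). In SL₂(𝔽_q), a triple (α, β, γ) ∈ 𝔽_q³ is singular, i.e. α² + β² + γ² − αβγ − 4 = 0, whenever there exist A, B ∈ SL₂(𝔽_q) with tr(A) = α, tr(B) = β, tr(AB) = γ such that A and B have a common eigenvector (i.e., generate a group with a common fixed point in its action on the projective line, a 'structural' subgroup). -/

import Mathlib

open Matrix

lemma quad_of_eigen {K : Type} [Field K] (N : Matrix (Fin 2) (Fin 2) K)
    (hdet : N.det = 1) (v : Fin 2 → K) (hv : v ≠ 0) (a : K)
    (h : N.mulVec v = a • v) : a ^ 2 - N.trace * a + 1 = 0 := by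
  obtain ⟨i, hi⟩ : ∃ i, v i ≠ 0 := by
    by_contra hc
    push_neg at hc
    exact hv (funext hc)
  have hd : N 0 0 * N 1 1 - N 0 1 * N 1 0 = 1 := by
    rw [Matrix.det_fin_two] at hdet; exact hdet
  have hCH : N * N = N.trace • N - (1 : Matrix (Fin 2) (Fin 2) K) := by
    ext i j
    fin_cases i <;> fin_cases j <;>
      simp [Matrix.mul_apply, Matrix.trace_fin_two, Fin.sum_univ_two, Matrix.one_apply] <;>
      first | linear_combination hd | linear_combination -hd | ring
  have h2 : (N * N).mulVec v = (a ^ 2) • v := by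
    rw [← Matrix.mulVec_mulVec, h, Matrix.mulVec_smul, h, smul_smul, sq]
  rw [hCH] at h2
  have h3 : (N.trace • N - (1 : Matrix (Fin 2) (Fin 2) K)).mulVec v
      = N.trace • (a • v) - v := by
    rw [Matrix.sub_mulVec, Matrix.smul_mulVec, h, Matrix.one_mulVec]
  rw [h3] at h2
  have h4 := congrFun h2 i
  simp only [Pi.sub_apply, Pi.smul_apply, smul_eq_mul] at h4
  have hz : (a ^ 2 - N.trace * a + 1) * v i = 0 := by linear_combination -h4
  rcases mul_eq_zero.mp hz with h | h
  · exact h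
  · exact absurd h hi

theorem singular_of_common_eigenvector (F : Type) [Field F] [Fintype F]
    (K : Type) [Field K] (φ : F →+* K)
    (A B : SpecialLinearGroup (Fin 2) F) (v : Fin 2 → K) (hv : v ≠ 0) (a b : K)
    (hA : ((A : Matrix (Fin 2) (Fin 2) F).map φ).mulVec v = a • v)
    (hB : ((B : Matrix (Fin 2) (Fin 2) F).map φ).mulVec v = b • v) :
    (Matrix.trace (A : Matrix (Fin 2) (Fin 2) F)) ^ 2 +
      (Matrix.trace (B : Matrix (Fin 2) (Fin 2) F)) ^ 2 +
      (Matrix.trace ((A * B : SpecialLinearGroup (Fin 2) F) : Matrix (Fin 2) (Fin 2) F)) ^ 2 -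
      Matrix.trace (A : Matrix (Fin 2) (Fin 2) F) *
        Matrix.trace (B : Matrix (Fin 2) (Fin 2) F) *
        Matrix.trace ((A * B : SpecialLinearGroup (Fin 2) F) : Matrix (Fin 2) (Fin 2) F) -
      4 = 0 := by
  have detmap : ∀ M : SpecialLinearGroup (Fin 2) F,
      ((M : Matrix (Fin 2) (Fin 2) F).map φ).det = 1 := by
    intro M
    have := (φ.map_det (M : Matrix (Fin 2) (Fin 2) F)).symm
    rw [RingHom.mapMatrix_apply] at this
    rw [this, M.2, _root_.map_one]
  have hAB : (((A * B : SpecialLinearGroup (Fin 2) F) : Matrix (Fin 2) (Fin 2) F).map φ).mulVec v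
      = (a * b) • v := by
    have hm : ((A * B : SpecialLinearGroup (Fin 2) F) : Matrix (Fin 2) (Fin 2) F).map φ
        = ((A : Matrix (Fin 2) (Fin 2) F).map φ) * ((B : Matrix (Fin 2) (Fin 2) F).map φ) := by
      simp [Matrix.map_mul]
    rw [hm, ← Matrix.mulVec_mulVec, hB, Matrix.mulVec_smul, hA, smul_smul, mul_comm]
  have qa := quad_of_eigen _ (detmap A) v hv a hA
  have qb := quad_of_eigen _ (detmap B) v hv b hB
  have qab := quad_of_eigen _ (detmap (A * B)) v hv (a * b) hAB
  have trmap : ∀ M : SpecialLinearGroup (Fin 2) F,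
      ((M : Matrix (Fin 2) (Fin 2) F).map φ).trace
        = φ ((M : Matrix (Fin 2) (Fin 2) F).trace) := by
    intro M
    simp [Matrix.trace_fin_two]
  rw [trmap] at qa qb qab
  have ha0 : a ≠ 0 := by rintro rfl; simp at qa
  have hb0 : b ≠ 0 := by rintro rfl; simp at qb
  have hab0 : a * b ≠ 0 := mul_ne_zero ha0 hb0
  have hαe : φ ((A : Matrix (Fin 2) (Fin 2) F).trace) = (a ^ 2 + 1) / a := by
    field_simp
    linear_combination -qa
  have hβe : φ ((B : Matrix (Fin 2) (Fin 2) F).trace) = (b ^ 2 + 1) / b := by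
    field_simp
    linear_combination -qb
  have hγe : φ (((A * B : SpecialLinearGroup (Fin 2) F) : Matrix (Fin 2) (Fin 2) F).trace)
      = ((a * b) ^ 2 + 1) / (a * b) := by
    field_simp
    linear_combination -qab
  apply φ.injective
  simp only [_root_.map_sub, _root_.map_add, _root_.map_pow, _root_.map_mul, map_zero,
    map_ofNat, hαe, hβe, hγe]
  field_simp
  have h3 : a ^ 6 * a⁻¹ ^ 6 = 1 := by rw [← mul_pow, mul_inv_cancel₀ ha0, one_pow]
  have h4 : b ^ 6 * b⁻¹ ^ 6 = 1 := by rw [← mul_pow, mul_inv_cancel₀ hb0, one_pow]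
  linear_combination
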